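/- Let G be a 2-connected graph and let (G_0, G_1, ..., G_s) be an ear-decomposition of G, where G_0 is a cycle containing the edge uv, P_0 = G_0 − uv, and for each i ∈ [s], P_i is the G_{i-1}-ear with endpoints ℓ_i, r_i added at step i. Define L = P_0 ∪ (∪_{i∈[s]} P_i − r_i) and R = P_0 ∪ (∪_{i∈[s]} P_i − ℓ_i). Then L and R are spanning trees of G. -/

import Mathlib

open SimpleGraph

namespace EarAux

variable {V : Type*} {G : SimpleGraph V}

lemma isAcyclic_of_no_adj {A : SimpleGraph V} (h : ∀ x y, ¬ A.Adj x y) : A.IsAcyclic := by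
  intro v c hc
  cases c with
  | nil => exact hc.ne_nil rfl
  | cons ha _ => exact h _ _ ha

lemma pendant_acyclic {A B : SimpleGraph V} (hA : A.IsAcyclic) {a b : V} (hab : a ≠ b)
    (hb : ∀ x, ¬ A.Adj b x)
    (hB : ∀ x y, B.Adj x y ↔ s(a, b) = s(x, y)) :
    (A ⊔ B).IsAcyclic := by
  have hBy : ∀ y, (A ⊔ B).Adj b y → y = a := by
    rintro y (h | h)
    · exact absurd h (hb y)
    · have := (hB b y).mp h
      rw [Sym2.eq_iff] at this
      rcases this with ⟨h1, h2⟩ | ⟨h1, h2⟩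
      · exact absurd h1 hab
      · exact h1.symm
  classical
  intro z c hc
  by_cases hbs : b ∈ c.support
  · obtain ⟨d, hc'⟩ : ∃ d : (A ⊔ B).Walk b b, d.IsCycle := ⟨c.rotate _ hbs, hc.rotate hbs⟩
    cases d with
    | nil => exact hc'.ne_nil rfl
    | cons h p =>
      rename_i y
      have hy := hBy y h
      have hby : b ≠ y := by rw [hy]; exact Ne.symm hab
      obtain ⟨y2, h2, q, hq⟩ := Walk.exists_eq_cons_of_ne hby p.reverse
      have hy2 := hBy y2 h2
      have hmem : s(b, y) ∈ p.edges := by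
        have hmm : s(b, y2) ∈ p.reverse.edges := by rw [hq]; simp
        rw [hy2, ← hy] at hmm
        rwa [Walk.edges_reverse, List.mem_reverse] at hmm
      have hnodup := hc'.edges_nodup
      rw [Walk.edges_cons] at hnodup
      exact (List.nodup_cons.mp hnodup).1 hmem
  · refine hA _ (hc.transfer ?_)
    intro e he
    have hsup := c.edges_subset_edgeSet he
    induction e with
    | _ x y =>
      rcases hsup with h | h
      · exact h
      · exfalso
        have := (hB x y).mp h
        rw [Sym2.eq_iff] at this
        rcases this with ⟨h1, h2⟩ | ⟨h1, h2⟩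
        · exact hbs (h2 ▸ Walk.snd_mem_support_of_mem_edges c he)
        · exact hbs (h2 ▸ Walk.fst_mem_support_of_mem_edges c he)


lemma spanningCoe_sup (A B : G.Subgraph) :
    (A ⊔ B).spanningCoe = A.spanningCoe ⊔ B.spanningCoe := rfl

lemma pendant_subgraph {T : G.Subgraph} (hTc : T.Connected) (hTa : T.spanningCoe.IsAcyclic)
    {a b : V} (ha : a ∈ T.verts) (hb : b ∉ T.verts) (hab : G.Adj a b) :
    (T ⊔ G.subgraphOfAdj hab).Connected ∧ (T ⊔ G.subgraphOfAdj hab).spanningCoe.IsAcyclic := by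
  constructor
  · refine Subgraph.connected_sup hTc.preconnected (Subgraph.subgraphOfAdj_connected hab).preconnected ⟨a, ?_⟩
    constructor
    · exact ha
    · simp
  · rw [spanningCoe_sup]
    refine pendant_acyclic hTa (fun hE => hb (by rw [← hE]; exact ha)) (fun x hx => hb (T.edge_vert hx))
      (fun x y => ?_)
    exact Iff.rfl

lemma deleteVerts_sup (A B : G.Subgraph) (s : Set V) :
    (A ⊔ B).deleteVerts s = A.deleteVerts s ⊔ B.deleteVerts s := by
  refine Subgraph.ext ?_ ?_
  · simp [Set.union_diff_distrib]
  · ext x y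
    simp only [Subgraph.deleteVerts_adj, Subgraph.sup_adj, Subgraph.verts_sup, Set.mem_union]
    constructor
    · rintro ⟨hx, hxs, hy, hys, (h | h)⟩
      · exact Or.inl ⟨A.edge_vert h, hxs, A.edge_vert h.symm, hys, h⟩
      · exact Or.inr ⟨B.edge_vert h, hxs, B.edge_vert h.symm, hys, h⟩
    · rintro (⟨hx, hxs, hy, hys, h⟩ | ⟨hx, hxs, hy, hys, h⟩)
      · exact ⟨Or.inl hx, hxs, Or.inl hy, hys, Or.inl h⟩
      · exact ⟨Or.inr hx, hxs, Or.inr hy, hys, Or.inr h⟩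

lemma deleteVerts_of_not_mem {A : G.Subgraph} {rr : V} (h : rr ∉ A.verts) :
    A.deleteVerts {rr} = A := by
  refine Subgraph.ext ?_ ?_
  · simp only [Subgraph.deleteVerts_verts]
    ext x
    simp only [Set.mem_diff, Set.mem_singleton_iff, and_iff_left_iff_imp]
    rintro hx rfl
    exact h hx
  · ext x y
    simp only [Subgraph.deleteVerts_adj, Set.mem_singleton_iff]
    constructor
    · rintro ⟨_, _, _, _, h'⟩
      exact h'
    · intro h'
      exact ⟨A.edge_vert h', fun he => h (he ▸ A.edge_vert h'),
        A.edge_vert h'.symm, fun he => h (he ▸ A.edge_vert h'.symm), h'⟩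

lemma attach_path {a b : V} (q : G.Walk a b) : q.IsPath →
    ∀ T : G.Subgraph, a ∈ T.verts → (∀ x ∈ q.support, x ≠ a → x ∉ T.verts) →
    T.Connected → T.spanningCoe.IsAcyclic →
    (T ⊔ q.toSubgraph).Connected ∧ (T ⊔ q.toSubgraph).spanningCoe.IsAcyclic := by
  induction q with
  | nil =>
    intro _ T ha _ hc hac
    rw [Walk.toSubgraph, sup_of_le_left ((SimpleGraph.singletonSubgraph_le_iff _ T).mpr ha)]
    exact ⟨hc, hac⟩
  | cons h p ih =>
    rename_i x y z
    intro hq T ha hin hc hac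
    have hpath : p.IsPath := hq.of_cons
    have hxp : x ∉ p.support := ((Walk.cons_isPath_iff h p).mp hq).2
    have hyT : y ∉ T.verts := by
      refine hin y (by simp) (fun hyx => hxp (hyx ▸ p.start_mem_support))
    obtain ⟨hc', hac'⟩ := pendant_subgraph hc hac ha hyT h
    rw [Walk.toSubgraph, ← sup_assoc]
    refine ih hpath (T ⊔ G.subgraphOfAdj h) (by simp) ?_ hc' hac'
    intro w hw hwy
    have hwx : w ≠ x := fun hh => hxp (hh ▸ hw)
    have : w ∉ T.verts := hin w (by simp [hw]) hwx
    simp only [Subgraph.verts_sup, Set.mem_union, subgraphOfAdj_verts, Set.mem_insert_iff,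
      Set.mem_singleton_iff]
    push_neg
    exact ⟨this, hwx, hwy⟩


lemma subgraphOfAdj_deleteVerts {a c : V} (h : G.Adj a c) :
    (G.subgraphOfAdj h).deleteVerts {a} = G.singletonSubgraph c := by
  refine Subgraph.ext ?_ ?_
  · simp only [Subgraph.deleteVerts_verts, subgraphOfAdj_verts, singletonSubgraph_verts]
    ext x
    simp only [Set.mem_diff, Set.mem_insert_iff, Set.mem_singleton_iff]
    constructor
    · rintro ⟨(rfl | rfl), hx⟩
      · exact absurd rfl hx
      · rfl
    · rintro rfl
      exact ⟨Or.inr rfl, h.ne'⟩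
  · ext x y
    simp only [Subgraph.deleteVerts_adj, Set.mem_singleton_iff, singletonSubgraph_adj,
      Pi.bot_apply, Prop.bot_eq_false, iff_false]
    rintro ⟨hx, hxa, hy, hya, hadj⟩
    have hadj' : s(a, c) = s(x, y) := hadj
    rw [Sym2.eq_iff] at hadj'
    rename' hadj' => hadj
    rcases hadj with ⟨rfl, rfl⟩ | ⟨rfl, rfl⟩
    · exact hxa rfl
    · exact hya rfl

lemma delete_last {a rr : V} (q : G.Walk a rr) (hq : q.IsPath) (hne : a ≠ rr) :
    ∃ (c : V) (p : G.Walk a c), p.IsPath ∧ q.toSubgraph.deleteVerts {rr} = p.toSubgraph ∧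
      (∀ x, x ∈ p.support ↔ x ∈ q.support ∧ x ≠ rr) := by
  obtain ⟨c, h, p', hp'⟩ := Walk.exists_eq_cons_of_ne (Ne.symm hne) q.reverse
  have hrevpath : q.reverse.IsPath := hq.reverse
  rw [hp'] at hrevpath
  have hp'path : p'.IsPath := hrevpath.of_cons
  have hrrp' : rr ∉ p'.support := ((Walk.cons_isPath_iff h p').mp hrevpath).2
  have hts : q.toSubgraph = G.subgraphOfAdj h ⊔ p'.toSubgraph := by
    rw [← q.toSubgraph_reverse, hp', Walk.toSubgraph]
  refine ⟨c, p'.reverse, hp'path.reverse, ?_, ?_⟩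
  · rw [hts, deleteVerts_sup, subgraphOfAdj_deleteVerts h,
      deleteVerts_of_not_mem (by rwa [Walk.mem_verts_toSubgraph]),
      p'.toSubgraph_reverse,
      sup_of_le_right ((SimpleGraph.singletonSubgraph_le_iff _ _).mpr
        p'.start_mem_verts_toSubgraph)]
  · intro x
    rw [Walk.support_reverse, List.mem_reverse]
    have hqsupp : ∀ y, y ∈ q.support ↔ y = rr ∨ y ∈ p'.support := by
      intro y
      have hy : y ∈ q.reverse.support ↔ y ∈ q.support := by
        rw [Walk.support_reverse, List.mem_reverse]
      rw [← hy, hp', Walk.support_cons]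
      simp
    constructor
    · intro hx
      exact ⟨(hqsupp x).mpr (Or.inr hx), fun hxr => hrrp' (hxr ▸ hx)⟩
    · rintro ⟨hx, hxr⟩
      rcases (hqsupp x).mp hx with rfl | hx'
      · exact absurd rfl hxr
      · exact hx'

lemma attach_ear {a rr : V} (q : G.Walk a rr) (hq : q.IsPath) (T : G.Subgraph)
    (ha : a ∈ T.verts) (hrr : rr ∈ T.verts)
    (hin : ∀ x ∈ q.support, x ≠ a → x ≠ rr → x ∉ T.verts)
    (hc : T.Connected) (hac : T.spanningCoe.IsAcyclic) :
    (T ⊔ q.toSubgraph.deleteVerts {rr}).Connected ∧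
    (T ⊔ q.toSubgraph.deleteVerts {rr}).spanningCoe.IsAcyclic ∧
    (T ⊔ q.toSubgraph.deleteVerts {rr}).verts = T.verts ∪ {x | x ∈ q.support} := by
  by_cases hne : a = rr
  · subst hne
    have hnil : q = Walk.nil := (Walk.isPath_iff_eq_nil (p := q)).mp hq
    subst hnil
    have hbot : (Walk.nil : G.Walk a a).toSubgraph.deleteVerts {a} = ⊥ := by
      refine Subgraph.ext ?_ ?_
      · simp [Walk.toSubgraph]
      · ext x y
        simp [Walk.toSubgraph, Subgraph.deleteVerts_adj]
    rw [hbot, sup_bot_eq]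
    refine ⟨hc, hac, ?_⟩
    ext x
    simp only [Set.mem_union, Set.mem_setOf_eq, Walk.support_nil, List.mem_singleton]
    constructor
    · exact Or.inl
    · rintro (hx | rfl)
      · exact hx
      · exact ha
  · obtain ⟨c, p, hppath, hdel, hsupp⟩ := delete_last q hq hne
    rw [hdel]
    have hcond : ∀ x ∈ p.support, x ≠ a → x ∉ T.verts := by
      intro x hx hxa
      obtain ⟨hxq, hxr⟩ := (hsupp x).mp hx
      exact hin x hxq hxa hxr
    obtain ⟨h1, h2⟩ := attach_path p hppath T ha hcond hc hac
    refine ⟨h1, h2, ?_⟩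
    rw [Subgraph.verts_sup, Walk.verts_toSubgraph]
    ext x
    simp only [Set.mem_union, Set.mem_setOf_eq]
    constructor
    · rintro (hx | hx)
      · exact Or.inl hx
      · exact Or.inr ((hsupp x).mp hx).1
    · rintro (hx | hx)
      · exact Or.inl hx
      · by_cases hxr : x = rr
        · exact Or.inl (hxr ▸ hrr)
        · exact Or.inr ((hsupp x).mpr ⟨hx, hxr⟩)


lemma spanning_connected {L : G.Subgraph} (h : L.Connected) (hv : L.verts = Set.univ) :
    L.spanningCoe.Connected := by
  obtain ⟨x, hx⟩ := h.nonempty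
  rw [connected_iff]
  refine ⟨?_, ⟨x⟩⟩
  intro y z
  have hy : y ∈ L.verts := hv ▸ Set.mem_univ y
  have hz : z ∈ L.verts := hv ▸ Set.mem_univ z
  have hreach : L.coe.Reachable ⟨y, hy⟩ ⟨z, hz⟩ := h.preconnected ⟨y, hy⟩ ⟨z, hz⟩
  exact hreach.map ⟨Subtype.val, fun hadj => hadj⟩

lemma aux {u v : V} (s : ℕ) (Vs : Fin (s + 1) → Set V)
    (p0 : G.Walk u v) (hp0 : p0.IsPath)
    (hv0 : Vs 0 = {x | x ∈ p0.support})
    (ℓ r : Fin s → V) (w : (i : Fin s) → G.Walk (ℓ i) (r i))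
    (hpath : ∀ i, (w i).IsPath)
    (hℓ : ∀ i, ℓ i ∈ Vs i.castSucc) (hr : ∀ i, r i ∈ Vs i.castSucc)
    (hin : ∀ i, ∀ x ∈ (w i).support, x ≠ ℓ i → x ≠ r i → x ∉ Vs i.castSucc)
    (hvstep : ∀ i, Vs i.succ = Vs i.castSucc ∪ {x | x ∈ (w i).support})
    (L : G.Subgraph)
    (hL : L = p0.toSubgraph ⊔ ⨆ i : Fin s, ((w i).toSubgraph.deleteVerts {r i})) :
    L.verts = Vs (Fin.last s) ∧ L.Connected ∧ L.spanningCoe.IsAcyclic := by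
  set D : Fin s → G.Subgraph := fun i => (w i).toSubgraph.deleteVerts {r i} with hD
  have key : ∀ k : ℕ, ∀ hk : k ≤ s,
      (p0.toSubgraph ⊔ ⨆ i : Fin s, ⨆ _ : (i : ℕ) < k, D i).verts
          = Vs ⟨k, Nat.lt_succ_of_le hk⟩ ∧
        (p0.toSubgraph ⊔ ⨆ i : Fin s, ⨆ _ : (i : ℕ) < k, D i).Connected ∧
        (p0.toSubgraph ⊔ ⨆ i : Fin s, ⨆ _ : (i : ℕ) < k, D i).spanningCoe.IsAcyclic := by
    intro k
    induction k with
    | zero =>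
      intro hk
      have hbz : (⨆ i : Fin s, ⨆ _ : (i : ℕ) < 0, D i) = ⊥ := by
        simp
      rw [hbz, sup_bot_eq]
      have h00 : (⟨0, Nat.lt_succ_of_le hk⟩ : Fin (s + 1)) = 0 := rfl
      refine ⟨by rw [h00, hv0, Walk.verts_toSubgraph], p0.toSubgraph_connected, ?_⟩
      have hle : G.singletonSubgraph u ≤ p0.toSubgraph :=
        (SimpleGraph.singletonSubgraph_le_iff _ _).mpr p0.start_mem_verts_toSubgraph
      have h1 := attach_path p0 hp0 (G.singletonSubgraph u)
        (by rw [singletonSubgraph_verts]; exact rfl)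
        (fun x _ hxu => by rw [singletonSubgraph_verts]; exact hxu)
        Subgraph.singletonSubgraph_connected
        (isAcyclic_of_no_adj fun x y h => h)
      rw [sup_eq_right.mpr hle] at h1
      exact h1.2
    | succ k ih =>
      intro hk
      have hk' : k < s := Nat.lt_of_succ_le hk
      obtain ⟨ihv, ihc, iha⟩ := ih (le_of_lt hk')
      have hsplit : (⨆ i : Fin s, ⨆ _ : (i : ℕ) < k + 1, D i)
          = (⨆ i : Fin s, ⨆ _ : (i : ℕ) < k, D i) ⊔ D ⟨k, hk'⟩ := by
        apply le_antisymm
        · refine iSup_le fun j => iSup_le fun hj => ?_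
          rcases Nat.lt_succ_iff_lt_or_eq.mp hj with hj' | hj'
          · exact le_sup_of_le_left (le_iSup_of_le j (le_iSup_of_le hj' le_rfl))
          · have hjk : j = ⟨k, hk'⟩ := Fin.ext hj'
            rw [hjk]
            exact le_sup_right
        · refine sup_le ?_ ?_
          · exact iSup_le fun j => iSup_le fun hj =>
              le_iSup_of_le j (le_iSup_of_le (Nat.lt_succ_of_lt hj) le_rfl)
          · exact le_iSup_of_le ⟨k, hk'⟩ (le_iSup_of_le (Nat.lt_succ_self k) le_rfl)
      rw [hsplit, ← sup_assoc]
      set i : Fin s := ⟨k, hk'⟩ with hidef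
      set T : G.Subgraph := p0.toSubgraph ⊔ ⨆ i : Fin s, ⨆ _ : (i : ℕ) < k, D i with hT
      have hcast : Vs i.castSucc = T.verts := ihv.symm
      obtain ⟨hc, hac, hv⟩ := attach_ear (w i) (hpath i) T
        (hcast ▸ hℓ i) (hcast ▸ hr i)
        (fun x hx hxl hxr => by rw [← hcast]; exact hin i x hx hxl hxr)
        ihc iha
      refine ⟨?_, hc, hac⟩
      rw [hv, ← hcast, ← hvstep i]
      rfl
  obtain ⟨hv, hc, ha⟩ := key s le_rfl
  have hcollapse : (⨆ i : Fin s, ⨆ _ : (i : ℕ) < s, D i) = ⨆ i : Fin s, D i :=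
    iSup_congr fun j => iSup_pos j.isLt
  rw [hcollapse] at hv hc ha
  rw [hL]
  exact ⟨hv, hc, ha⟩

end EarAux



/-- `w` is an `H`-ear: a path in `G` whose endpoints lie in `H`, whose inner vertices do
not lie in `H`, and whose edges are not edges of `H`. -/
def IsEar {V : Type*} {G : SimpleGraph V} (H : G.Subgraph) {x y : V}
    (w : G.Walk x y) : Prop :=
  w.IsPath ∧ x ∈ H.verts ∧ y ∈ H.verts ∧
    (∀ v ∈ w.support, v ≠ x → v ≠ y → v ∉ H.verts) ∧
    ∀ e ∈ w.edges, e ∉ H.edgeSet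

/-- Given an ear-decomposition of the 2-connected graph `G` where `G_0` is a cycle
consisting of the edge `uv` together with the `(u,v)`-path `P_0 = p0`, and where the `i`-th
ear `P_i = w i` has endpoints `ℓ i` and `r i`, the subgraphs
`L = P_0 ∪ (⋃ᵢ P_i − r_i)` and `R = P_0 ∪ (⋃ᵢ P_i − ℓ_i)` are spanning trees of `G`. -/
theorem stmt14 {V : Type*} [Fintype V] (G : SimpleGraph V) {u v : V}
    (huv : G.Adj u v) (s : ℕ) (Gs : Fin (s + 1) → G.Subgraph)
    (p0 : G.Walk u v) (hp0 : p0.IsPath) (hp0e : s(u, v) ∉ p0.edges)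
    (h0 : Gs 0 = p0.toSubgraph ⊔ G.subgraphOfAdj huv)
    (hlast : Gs (Fin.last s) = ⊤)
    (ℓ r : Fin s → V) (w : (i : Fin s) → G.Walk (ℓ i) (r i))
    (hear : ∀ i : Fin s, IsEar (Gs i.castSucc) (w i))
    (hstep : ∀ i : Fin s, Gs i.succ = Gs i.castSucc ⊔ (w i).toSubgraph)
    (L R : G.Subgraph)
    (hL : L = p0.toSubgraph ⊔ ⨆ i : Fin s, ((w i).toSubgraph.deleteVerts {r i}))
    (hR : R = p0.toSubgraph ⊔ ⨆ i : Fin s, ((w i).toSubgraph.deleteVerts {ℓ i})) :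
    (L.verts = Set.univ ∧ L.spanningCoe.IsTree) ∧
      (R.verts = Set.univ ∧ R.spanningCoe.IsTree) := by
  classical
  have hv0 : (Gs 0).verts = {x | x ∈ p0.support} := by
    rw [h0, SimpleGraph.Subgraph.verts_sup, SimpleGraph.Walk.verts_toSubgraph,
      SimpleGraph.subgraphOfAdj_verts]
    ext x
    simp only [Set.mem_union, Set.mem_setOf_eq, Set.mem_insert_iff, Set.mem_singleton_iff]
    constructor
    · rintro (hx | rfl | rfl)
      · exact hx
      · exact p0.start_mem_support
      · exact p0.end_mem_support
    · exact Or.inl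
  have hvstep : ∀ i : Fin s,
      (Gs i.succ).verts = (Gs i.castSucc).verts ∪ {x | x ∈ (w i).support} := by
    intro i
    rw [hstep i, SimpleGraph.Subgraph.verts_sup, SimpleGraph.Walk.verts_toSubgraph]
  have hLres := EarAux.aux s (fun k => (Gs k).verts) p0 hp0 hv0 ℓ r w
    (fun i => (hear i).1) (fun i => (hear i).2.1) (fun i => (hear i).2.2.1)
    (fun i => (hear i).2.2.2.1) hvstep L hL
  have hRres := EarAux.aux s (fun k => (Gs k).verts) p0 hp0 hv0 r ℓ (fun i => (w i).reverse)
    (fun i => (hear i).1.reverse) (fun i => (hear i).2.2.1) (fun i => (hear i).2.1)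
    (fun i x hx hxr hxl => (hear i).2.2.2.1 x
      (by rwa [SimpleGraph.Walk.support_reverse, List.mem_reverse] at hx) hxl hxr)
    (fun i => by
      show (Gs i.succ).verts = (Gs i.castSucc).verts ∪ {x | x ∈ (w i).reverse.support}
      rw [hvstep i]
      congr 1
      ext x
      simp [SimpleGraph.Walk.support_reverse])
    R (by
      rw [hR]
      congr 1
      exact iSup_congr fun i => by rw [SimpleGraph.Walk.toSubgraph_reverse])
  have hlastv : (Gs (Fin.last s)).verts = Set.univ := by rw [hlast]; rfl
  obtain ⟨hLv, hLc, hLa⟩ := hLres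
  obtain ⟨hRv, hRc, hRa⟩ := hRres
  have hLv' : L.verts = Set.univ := by rw [hLv]; exact hlastv
  have hRv' : R.verts = Set.univ := by rw [hRv]; exact hlastv
  exact ⟨⟨hLv', EarAux.spanning_connected hLc hLv', hLa⟩,
    ⟨hRv', EarAux.spanning_connected hRc hRv', hRa⟩⟩
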